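/- For X = L²((0,∞), t^s e^{-t} dt) with s > -1, the best constant for the second derivative over polynomials of degree at most 2 is M_{2,2}(s) = √(2/((s+1)(s+2))); in particular M_{2,2}(0) = 1. -/

import Mathlib

open MeasureTheory

/-- The `L²((0,∞), t^s e^{-t} dt)` norm of a polynomial. -/
noncomputable def genLaguerreNorm (s : ℝ) (p : Polynomial ℝ) : ℝ :=
  Real.sqrt (∫ t in Set.Ioi (0 : ℝ), (p.eval t) ^ 2 * t ^ s * Real.exp (-t))

namespace GenLagAux

lemma integrableOn_aux (s : ℝ) (hs : s > -1) (k : ℕ) :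
    IntegrableOn (fun t : ℝ => t ^ k * t ^ s * Real.exp (-t)) (Set.Ioi 0) := by
  have h0 : (0:ℝ) ≤ (k:ℝ) := Nat.cast_nonneg k
  have h : (0:ℝ) < s + (k:ℝ) + 1 := by linarith
  refine (Real.GammaIntegral_convergent h).congr_fun (fun x hx => ?_) measurableSet_Ioi
  have hx0 : (0:ℝ) < x := hx
  beta_reduce
  rw [show s + (k:ℝ) + 1 - 1 = (k:ℝ) + s by ring, Real.rpow_add hx0, Real.rpow_natCast]
  ring

lemma integral_aux (s : ℝ) (hs : s > -1) (k : ℕ) :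
    ∫ t in Set.Ioi (0:ℝ), t ^ k * t ^ s * Real.exp (-t) = Real.Gamma (s + (k:ℝ) + 1) := by
  have h0 : (0:ℝ) ≤ (k:ℝ) := Nat.cast_nonneg k
  have h : (0:ℝ) < s + (k:ℝ) + 1 := by linarith
  rw [Real.Gamma_eq_integral h]
  refine setIntegral_congr_fun measurableSet_Ioi (fun x hx => ?_)
  have hx0 : (0:ℝ) < x := hx
  beta_reduce
  rw [show s + (k:ℝ) + 1 - 1 = (k:ℝ) + s by ring, Real.rpow_add hx0, Real.rpow_natCast]
  ring

lemma normSq (s : ℝ) (hs : s > -1) (a b c : ℝ) :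
    ∫ t in Set.Ioi (0:ℝ), (c + b*t + a*t^2)^2 * t^s * Real.exp (-t)
      = c^2 * Real.Gamma (s+1) + 2*b*c * Real.Gamma (s+2)
        + (b^2 + 2*a*c) * Real.Gamma (s+3) + 2*a*b * Real.Gamma (s+4)
        + a^2 * Real.Gamma (s+5) := by
  have h0 := integrableOn_aux s hs 0
  have h1 := integrableOn_aux s hs 1
  have h2 := integrableOn_aux s hs 2
  have h3 := integrableOn_aux s hs 3
  have h4 := integrableOn_aux s hs 4
  have key : ∀ t : ℝ, (c + b*t + a*t^2)^2 * t^s * Real.exp (-t)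
      = c^2 * (t^(0:ℕ) * t^s * Real.exp (-t)) + (2*b*c) * (t^(1:ℕ)*t^s*Real.exp (-t))
        + (b^2+2*a*c) * (t^(2:ℕ)*t^s*Real.exp (-t)) + (2*a*b)*(t^(3:ℕ)*t^s*Real.exp (-t))
        + a^2 * (t^(4:ℕ)*t^s*Real.exp (-t)) := fun t => by ring
  simp only [key]
  have H0 : Integrable (fun t : ℝ => c^2 * (t^(0:ℕ) * t^s * Real.exp (-t)))
      (volume.restrict (Set.Ioi 0)) := h0.const_mul _
  have H1 : Integrable (fun t : ℝ => (2*b*c) * (t^(1:ℕ) * t^s * Real.exp (-t)))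
      (volume.restrict (Set.Ioi 0)) := h1.const_mul _
  have H2 : Integrable (fun t : ℝ => (b^2+2*a*c) * (t^(2:ℕ) * t^s * Real.exp (-t)))
      (volume.restrict (Set.Ioi 0)) := h2.const_mul _
  have H3 : Integrable (fun t : ℝ => (2*a*b) * (t^(3:ℕ) * t^s * Real.exp (-t)))
      (volume.restrict (Set.Ioi 0)) := h3.const_mul _
  have H4 : Integrable (fun t : ℝ => a^2 * (t^(4:ℕ) * t^s * Real.exp (-t)))
      (volume.restrict (Set.Ioi 0)) := h4.const_mul _
  have H01 : Integrable (fun t : ℝ => c^2 * (t^(0:ℕ) * t^s * Real.exp (-t))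
      + (2*b*c) * (t^(1:ℕ) * t^s * Real.exp (-t))) (volume.restrict (Set.Ioi 0)) := H0.add H1
  have H012 : Integrable (fun t : ℝ => c^2 * (t^(0:ℕ) * t^s * Real.exp (-t))
      + (2*b*c) * (t^(1:ℕ) * t^s * Real.exp (-t))
      + (b^2+2*a*c) * (t^(2:ℕ) * t^s * Real.exp (-t))) (volume.restrict (Set.Ioi 0)) :=
    H01.add H2
  have H0123 : Integrable (fun t : ℝ => c^2 * (t^(0:ℕ) * t^s * Real.exp (-t))
      + (2*b*c) * (t^(1:ℕ) * t^s * Real.exp (-t))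
      + (b^2+2*a*c) * (t^(2:ℕ) * t^s * Real.exp (-t))
      + (2*a*b) * (t^(3:ℕ) * t^s * Real.exp (-t))) (volume.restrict (Set.Ioi 0)) :=
    H012.add H3
  rw [integral_add H0123 H4, integral_add H012 H3, integral_add H01 H2, integral_add H0 H1,
      integral_const_mul, integral_const_mul, integral_const_mul, integral_const_mul,
      integral_const_mul,
      integral_aux s hs 0, integral_aux s hs 1, integral_aux s hs 2, integral_aux s hs 3,
      integral_aux s hs 4]
  norm_num
  ring_nf

lemma eval_deg2 (p : Polynomial ℝ) (hp : p.natDegree ≤ 2) (t : ℝ) :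
    p.eval t = p.coeff 0 + p.coeff 1 * t + p.coeff 2 * t^2 := by
  have h : p.natDegree < 3 := by omega
  rw [Polynomial.eval_eq_sum_range' h]
  simp [Finset.sum_range_succ]

lemma integral_eval (s : ℝ) (hs : s > -1) (p : Polynomial ℝ) (hp : p.natDegree ≤ 2) :
    ∫ t in Set.Ioi (0:ℝ), (p.eval t)^2 * t^s * Real.exp (-t)
      = (p.coeff 0)^2 * Real.Gamma (s+1) + 2*(p.coeff 1)*(p.coeff 0) * Real.Gamma (s+2)
        + ((p.coeff 1)^2 + 2*(p.coeff 2)*(p.coeff 0)) * Real.Gamma (s+3)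
        + 2*(p.coeff 2)*(p.coeff 1) * Real.Gamma (s+4)
        + (p.coeff 2)^2 * Real.Gamma (s+5) := by
  simp only [eval_deg2 p hp]
  exact normSq s hs _ _ _

lemma dd_eq (p : Polynomial ℝ) (hp : p.natDegree ≤ 2) :
    p.derivative.derivative = Polynomial.C (2 * p.coeff 2) := by
  have h1 : p.derivative.natDegree ≤ 1 :=
    le_trans (Polynomial.natDegree_derivative_le p) (by omega)
  have h2 : p.derivative.derivative.natDegree ≤ 0 :=
    le_trans (Polynomial.natDegree_derivative_le _) (by omega)
  rw [Polynomial.eq_C_of_natDegree_le_zero h2]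
  congr 1
  rw [Polynomial.coeff_derivative, Polynomial.coeff_derivative]
  push_cast
  ring

end GenLagAux

open GenLagAux in
theorem best_constant_second_derivative_deg_two (s : ℝ) (hs : s > -1) :
    sSup {r : ℝ | ∃ p : Polynomial ℝ, p ≠ 0 ∧ p.natDegree ≤ 2 ∧
        r = genLaguerreNorm s p.derivative.derivative / genLaguerreNorm s p} =
      Real.sqrt (2 / ((s + 1) * (s + 2))) ∧
    Real.sqrt (2 / ((0 + 1) * ((0 : ℝ) + 2))) = 1 := by
  have hu : (0:ℝ) < s + 1 := by linarith
  have hv : (0:ℝ) < s + 2 := by linarith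
  have hg : 0 < Real.Gamma (s+1) := Real.Gamma_pos_of_pos hu
  have g2 : Real.Gamma (s+2) = (s+1) * Real.Gamma (s+1) := by
    rw [show s+2 = (s+1)+1 by ring, Real.Gamma_add_one (ne_of_gt hu)]
  have g3 : Real.Gamma (s+3) = (s+2) * Real.Gamma (s+2) := by
    rw [show s+3 = (s+2)+1 by ring, Real.Gamma_add_one (ne_of_gt hv)]
  have g4 : Real.Gamma (s+4) = (s+3) * Real.Gamma (s+3) := by
    rw [show s+4 = (s+3)+1 by ring, Real.Gamma_add_one (by linarith)]
  have g5 : Real.Gamma (s+5) = (s+4) * Real.Gamma (s+4) := by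
    rw [show s+5 = (s+4)+1 by ring, Real.Gamma_add_one (by linarith)]
  set G := Real.Gamma (s+1) with hG
  set M := Real.sqrt (2 / ((s + 1) * (s + 2))) with hM
  have hMnn : 0 ≤ M := Real.sqrt_nonneg _
  have huv : (0:ℝ) < (s+1)*(s+2) := mul_pos hu hv
  -- the key sum-of-squares identity for the squared norm
  have key : ∀ a b c : ℝ,
      c^2 * Real.Gamma (s+1) + 2*b*c * Real.Gamma (s+2)
        + (b^2 + 2*a*c) * Real.Gamma (s+3) + 2*a*b * Real.Gamma (s+4)
        + a^2 * Real.Gamma (s+5)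
      = G * ((c + (s+1)*b + (s+1)*(s+2)*a)^2 + (s+1)*(b + 2*(s+2)*a)^2
          + 2*(s+1)*(s+2)*a^2) := by
    intro a b c
    rw [g5, g4, g3, g2, ← hG]
    ring
  -- norm formulas
  have normP : ∀ p : Polynomial ℝ, p.natDegree ≤ 2 →
      genLaguerreNorm s p = Real.sqrt (G * ((p.coeff 0 + (s+1)*p.coeff 1
        + (s+1)*(s+2)*p.coeff 2)^2 + (s+1)*(p.coeff 1 + 2*(s+2)*p.coeff 2)^2
        + 2*(s+1)*(s+2)*(p.coeff 2)^2)) := by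
    intro p hp
    unfold genLaguerreNorm
    rw [integral_eval s hs p hp, key]
  have normDD : ∀ p : Polynomial ℝ, p.natDegree ≤ 2 →
      genLaguerreNorm s p.derivative.derivative
        = Real.sqrt (G * (2*p.coeff 2)^2) := by
    intro p hp
    unfold genLaguerreNorm
    rw [dd_eq p hp,
      integral_eval s hs _ ((Polynomial.natDegree_C _).le.trans (by norm_num))]
    have e0 : (Polynomial.C (2 * p.coeff 2) : Polynomial ℝ).coeff 0 = 2 * p.coeff 2 :=
      Polynomial.coeff_C_zero
    have e1 : (Polynomial.C (2 * p.coeff 2) : Polynomial ℝ).coeff 1 = 0 := by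
      rw [Polynomial.coeff_C]; norm_num
    have e2 : (Polynomial.C (2 * p.coeff 2) : Polynomial ℝ).coeff 2 = 0 := by
      rw [Polynomial.coeff_C]; norm_num
    rw [e0, e1, e2]
    congr 1
    ring
  constructor
  · -- main claim
    set S : Set ℝ := {r : ℝ | ∃ p : Polynomial ℝ, p ≠ 0 ∧ p.natDegree ≤ 2 ∧
        r = genLaguerreNorm s p.derivative.derivative / genLaguerreNorm s p} with hS
    -- upper bound
    have hub : ∀ r ∈ S, r ≤ M := by
      rintro r ⟨p, hp0, hp2, rfl⟩
      set a := p.coeff 2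
      set b := p.coeff 1
      set c := p.coeff 0
      by_cases ha : a = 0
      · rw [normDD p hp2]
        simp [show p.coeff 2 = 0 from ha, hMnn]
      · set A := c + (s+1)*b + (s+1)*(s+2)*a with hA
        set B := b + 2*(s+2)*a with hB
        set N := G * (A^2 + (s+1)*B^2 + 2*(s+1)*(s+2)*a^2) with hN
        have hNpos : 0 < N := by
          have : 0 < 2*(s+1)*(s+2)*a^2 := by positivity
          have h2 : 0 < A^2 + (s+1)*B^2 + 2*(s+1)*(s+2)*a^2 := by positivity
          exact mul_pos hg h2
        rw [normDD p hp2, normP p hp2, ← hA, ← hB, ← hN]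
        rw [div_le_iff₀ (Real.sqrt_pos.2 hNpos)]
        have step : G * (2*a)^2 ≤ (2 / ((s+1)*(s+2))) * N := by
          rw [hN]
          have hsq : 0 ≤ A^2 + (s+1)*B^2 := by positivity
          rw [div_mul_eq_mul_div, le_div_iff₀ huv]
          nlinarith [mul_nonneg hg.le hsq]
        calc Real.sqrt (G * (2*a)^2) ≤ Real.sqrt ((2 / ((s+1)*(s+2))) * N) :=
              Real.sqrt_le_sqrt step
          _ = M * Real.sqrt N := by
              rw [Real.sqrt_mul (by positivity) N, hM]
    -- the extremizer
    have hmem : M ∈ S := by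
      refine ⟨Polynomial.C 1 * Polynomial.X^2 + Polynomial.C (-2*(s+2)) * Polynomial.X
        + Polynomial.C ((s+1)*(s+2)), ?_, ?_, ?_⟩
      · intro h
        have := Polynomial.natDegree_quadratic (one_ne_zero (α := ℝ))
          (b := -2*(s+2)) (c := (s+1)*(s+2))
        rw [h] at this
        simp at this
      · exact Polynomial.natDegree_quadratic_le
      · have hdeg : (Polynomial.C 1 * Polynomial.X^2 + Polynomial.C (-2*(s+2)) * Polynomial.X
            + Polynomial.C ((s+1)*(s+2)) : Polynomial ℝ).natDegree ≤ 2 :=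
          Polynomial.natDegree_quadratic_le
        have hc2 : (Polynomial.C 1 * Polynomial.X^2 + Polynomial.C (-2*(s+2)) * Polynomial.X
            + Polynomial.C ((s+1)*(s+2)) : Polynomial ℝ).coeff 2 = 1 := by
          simp only [Polynomial.coeff_add, Polynomial.coeff_C_mul, Polynomial.coeff_X_pow,
            Polynomial.coeff_X, Polynomial.coeff_C]
          norm_num
        have hc1 : (Polynomial.C 1 * Polynomial.X^2 + Polynomial.C (-2*(s+2)) * Polynomial.X
            + Polynomial.C ((s+1)*(s+2)) : Polynomial ℝ).coeff 1 = -2*(s+2) := by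
          simp only [Polynomial.coeff_add, Polynomial.coeff_C_mul, Polynomial.coeff_X_pow,
            Polynomial.coeff_X, Polynomial.coeff_C]
          norm_num
        have hc0 : (Polynomial.C 1 * Polynomial.X^2 + Polynomial.C (-2*(s+2)) * Polynomial.X
            + Polynomial.C ((s+1)*(s+2)) : Polynomial ℝ).coeff 0 = (s+1)*(s+2) := by
          simp only [Polynomial.coeff_add, Polynomial.coeff_C_mul, Polynomial.coeff_X_pow,
            Polynomial.coeff_X, Polynomial.coeff_C]
          norm_num
        rw [normDD _ hdeg, normP _ hdeg, hc0, hc1, hc2]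
        have e1 : ((s+1)*(s+2) + (s+1)*(-2*(s+2)) + (s+1)*(s+2)*1)^2
            + (s+1)*((-2*(s+2)) + 2*(s+2)*1)^2 + 2*(s+1)*(s+2)*(1:ℝ)^2
            = 2*(s+1)*(s+2) := by ring
        rw [e1]
        have hnum : (0:ℝ) ≤ G * (2*(1:ℝ))^2 := mul_nonneg hg.le (by norm_num)
        have hval : G * (2*(1:ℝ))^2 / (G * (2*(s+1)*(s+2))) = 2 / ((s+1)*(s+2)) := by
          rw [div_eq_div_iff (by positivity) (ne_of_gt huv)]
          ring
        rw [hM, ← hval, Real.sqrt_div hnum]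
    exact le_antisymm (csSup_le ⟨M, hmem⟩ hub) (le_csSup ⟨M, hub⟩ hmem)
  · norm_num
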